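/- Properties of the centering operator: for every (Y,p) ∈ L⁰ × ℤ, writing (X,p') = J(Y,p): (i) inf supp(X⁻) = inf supp(Y⁻) − [p,p'] and sup supp(X⁺) = sup supp(Y⁺) − [p,p']; (ii) inf supp(X⁻) + sup supp(X⁺) + 2⌈p'/2⌉ = inf supp(Y⁻) + sup supp(Y⁺) + 2⌈p/2⌉. -/

import Mathlib

open scoped BigOperators

namespace COB

/-- Vectors of queue sizes indexed by prices in `I = {−d',…,d'}` (functions `ℤ → ℕ`
vanishing outside `I`; the support condition is part of membership in `Em`). -/
abbrev VecC := ℤ → ℕ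

/-- Pairs (buy side, sell side). -/
abbrev EC := VecC × VecC

/-- A vector is supported in `{−d',…,d'}`. -/
def suppIn (d' : ℕ) (Z : VecC) : Prop :=
  ∀ j : ℤ, Z j ≠ 0 → -(d' : ℤ) ≤ j ∧ j ≤ (d' : ℤ)

/-- Price support of a vector, inside `I = {−d',…,d'}`. -/
noncomputable def suppC (d' : ℕ) (Z : VecC) : Finset ℤ :=
  (Finset.Icc (-(d' : ℤ)) (d' : ℤ)).filter fun j => 0 < Z j

/-- `sup` of a finite set of prices, with the convention `sup ∅ = −d'`. -/
def supD (d' : ℕ) (S : Finset ℤ) : ℤ := if h : S.Nonempty then S.max' h else -(d' : ℤ)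

/-- `inf` of a finite set of prices, with the convention `inf ∅ = d'`. -/
def infD (d' : ℕ) (S : Finset ℤ) : ℤ := if h : S.Nonempty then S.min' h else (d' : ℤ)

/-- bid price `b(X) = sup supp(X⁺)` (convention `sup supp(0) = −d'`). -/
noncomputable def bC (d' : ℕ) (X : EC) : ℤ := supD d' (suppC d' X.1)

/-- ask price `a(X) = inf supp(X⁻)` (convention `inf supp(0) = d'`). -/
noncomputable def aC (d' : ℕ) (X : EC) : ℤ := infD d' (suppC d' X.2)

/-- `E^m`: configurations supported in `I` with nonempty buy and sell sides. -/
def Em (d' : ℕ) : Set EC :=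
  {X | suppIn d' X.1 ∧ suppIn d' X.2 ∧ X.1 ≠ 0 ∧ X.2 ≠ 0}

/-- `L⁰`: elements of `E^m` with `a(X) > b(X)`. -/
def L0 (d' : ℕ) : Set EC := {X | X ∈ Em d' ∧ bC d' X < aC d' X}

/-- `p̂`: the parity of `p` (`0` if `p` is even, `1` if `p` is odd). -/
def hatp (p : ℤ) : ℤ := p % 2

/-- `⌈p/2⌉` for an integer `p`. -/
def ceilHalf (p : ℤ) : ℤ := Int.fdiv (p + 1) 2

/-- `[p,p'] = ⌈p'/2⌉ − ⌈p/2⌉`. -/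
def shift (p p' : ℤ) : ℤ := ceilHalf p' - ceilHalf p

/-- The centred state space `L^m`. -/
def Lm (d' : ℕ) : Set (EC × ℤ) :=
  {Xp | Xp.1 ∈ Em d' ∧ bC d' Xp.1 < aC d' Xp.1 ∧
    aC d' Xp.1 + bC d' Xp.1 + hatp Xp.2 = 0}

/-- The truncating shift `σ_i` on a single vector. -/
def sigmaV (d' : ℕ) (i : ℤ) (Y : VecC) : VecC := fun j =>
  if min (d' : ℤ) ((d' : ℤ) - i) < j ∨ j < max (-(d' : ℤ)) (-(d' : ℤ) - i) then 0
  else Y (j + i)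

/-- The truncating shift `σ_i` acting componentwise on pairs. -/
def sigmaP (d' : ℕ) (i : ℤ) (Y : EC) : EC := (sigmaV d' i Y.1, sigmaV d' i Y.2)

/-- The centering operator `J(Y,p) = (σ_{[p,p']}(Y), p')`, `p' = p + a(Y) + b(Y) + p̂`. -/
noncomputable def J (d' : ℕ) (Y : EC) (p : ℤ) : EC × ℤ :=
  (sigmaP d' (shift p (p + aC d' Y + bC d' Y + hatp p)) Y,
    p + aC d' Y + bC d' Y + hatp p)


lemma ceilHalf_eq (p : ℤ) : ceilHalf p = (p + 1) / 2 := by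
  rw [ceilHalf, Int.fdiv_eq_ediv_of_nonneg _ (by norm_num)]

lemma mem_suppC {d' : ℕ} {Z : VecC} {j : ℤ} :
    j ∈ suppC d' Z ↔ (-(d' : ℤ) ≤ j ∧ j ≤ (d' : ℤ)) ∧ 0 < Z j := by
  simp [suppC, Finset.mem_filter, Finset.mem_Icc, and_assoc]

lemma mem_suppC_sigmaV {d' : ℕ} {i : ℤ} {Z : VecC} {j : ℤ} :
    j ∈ suppC d' (sigmaV d' i Z) ↔
      (max (-(d' : ℤ)) (-(d' : ℤ) - i) ≤ j ∧ j ≤ min (d' : ℤ) ((d' : ℤ) - i)) ∧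
        0 < Z (j + i) := by
  rw [mem_suppC, sigmaV]
  by_cases h : min (d' : ℤ) ((d' : ℤ) - i) < j ∨ j < max (-(d' : ℤ)) (-(d' : ℤ) - i)
  · simp only [if_pos h]
    constructor
    · rintro ⟨-, h0⟩; omega
    · rintro ⟨hb, -⟩; omega
  · simp only [if_neg h]
    constructor
    · rintro ⟨-, h0⟩; exact ⟨by omega, h0⟩
    · rintro ⟨hb, h0⟩; exact ⟨by omega, h0⟩

lemma suppC_ne {d' : ℕ} {Z : VecC} (hs : suppIn d' Z) (hz : Z ≠ 0) :
    (suppC d' Z).Nonempty := by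
  obtain ⟨j, hj⟩ : ∃ j, Z j ≠ 0 := by
    by_contra h
    push_neg at h
    exact hz (funext fun j => h j)
  exact ⟨j, mem_suppC.mpr ⟨hs j hj, Nat.pos_of_ne_zero hj⟩⟩

lemma infD_sigma {d' : ℕ} {i : ℤ} {Z : VecC} (hne : (suppC d' Z).Nonempty)
    (h1 : -(d' : ℤ) ≤ infD d' (suppC d' Z) - i)
    (h2 : infD d' (suppC d' Z) - i ≤ (d' : ℤ)) :
    infD d' (suppC d' (sigmaV d' i Z)) = infD d' (suppC d' Z) - i := by
  have hm : infD d' (suppC d' Z) ∈ suppC d' Z := by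
    rw [infD, dif_pos hne]; exact Finset.min'_mem _ hne
  obtain ⟨⟨hml, hmr⟩, hmz⟩ := mem_suppC.mp hm
  have hmem : infD d' (suppC d' Z) - i ∈ suppC d' (sigmaV d' i Z) := by
    rw [mem_suppC_sigmaV]
    constructor
    · constructor <;> omega
    · simpa using hmz
  have hne' : (suppC d' (sigmaV d' i Z)).Nonempty := ⟨_, hmem⟩
  rw [infD, dif_pos hne']
  apply le_antisymm
  · exact Finset.min'_le _ _ hmem
  · have hjm := Finset.min'_mem _ hne'
    obtain ⟨⟨hjl, hjr⟩, hjz⟩ := mem_suppC_sigmaV.mp hjm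
    have : (suppC d' (sigmaV d' i Z)).min' hne' + i ∈ suppC d' Z := by
      rw [mem_suppC]; exact ⟨⟨by omega, by omega⟩, hjz⟩
    have := Finset.min'_le _ _ this
    rw [infD, dif_pos hne] at *
    omega

lemma supD_sigma {d' : ℕ} {i : ℤ} {Z : VecC} (hne : (suppC d' Z).Nonempty)
    (h1 : -(d' : ℤ) ≤ supD d' (suppC d' Z) - i)
    (h2 : supD d' (suppC d' Z) - i ≤ (d' : ℤ)) :
    supD d' (suppC d' (sigmaV d' i Z)) = supD d' (suppC d' Z) - i := by
  have hm : supD d' (suppC d' Z) ∈ suppC d' Z := by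
    rw [supD, dif_pos hne]; exact Finset.max'_mem _ hne
  obtain ⟨⟨hml, hmr⟩, hmz⟩ := mem_suppC.mp hm
  have hmem : supD d' (suppC d' Z) - i ∈ suppC d' (sigmaV d' i Z) := by
    rw [mem_suppC_sigmaV]
    constructor
    · constructor <;> omega
    · simpa using hmz
  have hne' : (suppC d' (sigmaV d' i Z)).Nonempty := ⟨_, hmem⟩
  rw [supD, dif_pos hne']
  apply le_antisymm
  · have hjm := Finset.max'_mem _ hne'
    obtain ⟨⟨hjl, hjr⟩, hjz⟩ := mem_suppC_sigmaV.mp hjm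
    have : (suppC d' (sigmaV d' i Z)).max' hne' + i ∈ suppC d' Z := by
      rw [mem_suppC]; exact ⟨⟨by omega, by omega⟩, hjz⟩
    have := Finset.le_max' _ _ this
    rw [supD, dif_pos hne] at *
    omega
  · exact Finset.le_max' _ _ hmem

lemma infD_bounds {d' : ℕ} {Z : VecC} (hne : (suppC d' Z).Nonempty) :
    -(d' : ℤ) ≤ infD d' (suppC d' Z) ∧ infD d' (suppC d' Z) ≤ (d' : ℤ) := by
  have hm : infD d' (suppC d' Z) ∈ suppC d' Z := by
    rw [infD, dif_pos hne]; exact Finset.min'_mem _ hne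
  exact (mem_suppC.mp hm).1

lemma supD_bounds {d' : ℕ} {Z : VecC} (hne : (suppC d' Z).Nonempty) :
    -(d' : ℤ) ≤ supD d' (suppC d' Z) ∧ supD d' (suppC d' Z) ≤ (d' : ℤ) := by
  have hm : supD d' (suppC d' Z) ∈ suppC d' Z := by
    rw [supD, dif_pos hne]; exact Finset.max'_mem _ hne
  exact (mem_suppC.mp hm).1


/-- Lemma D.2 of Cont–Degond–Xuan: properties of the centering
operator: with `(X,p') = J(Y,p)`, (i) `inf supp(X⁻) = inf supp(Y⁻) − [p,p']` and
`sup supp(X⁺) = sup supp(Y⁺) − [p,p']`; (ii)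
`inf supp(X⁻) + sup supp(X⁺) + 2⌈p'/2⌉ = inf supp(Y⁻) + sup supp(Y⁺) + 2⌈p/2⌉`. -/
theorem J_properties (d' : ℕ) (hd' : 1 ≤ d') :
    ∀ Y ∈ L0 d', ∀ p : ℤ,
      aC d' (J d' Y p).1 = aC d' Y - shift p (J d' Y p).2 ∧
      bC d' (J d' Y p).1 = bC d' Y - shift p (J d' Y p).2 ∧
      aC d' (J d' Y p).1 + bC d' (J d' Y p).1 + 2 * ceilHalf (J d' Y p).2 =
        aC d' Y + bC d' Y + 2 * ceilHalf p := by
  intro Y hY p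
  obtain ⟨⟨hs1, hs2, hz1, hz2⟩, hba⟩ := hY
  have hne1 : (suppC d' Y.1).Nonempty := suppC_ne hs1 hz1
  have hne2 : (suppC d' Y.2).Nonempty := suppC_ne hs2 hz2
  set a := aC d' Y with ha
  set b := bC d' Y with hb
  obtain ⟨ha1, ha2⟩ := infD_bounds (Z := Y.2) hne2
  obtain ⟨hb1, hb2⟩ := supD_bounds (Z := Y.1) hne1
  simp only [aC] at ha1 ha2 hba ha
  simp only [bC] at hb1 hb2 hba hb
  set p' : ℤ := p + a + b + hatp p with hp'
  set s : ℤ := shift p p' with hs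
  have hseq : s = (a + b + 1) / 2 := by
    rw [hs, shift, ceilHalf_eq, ceilHalf_eq, hp', hatp]
    omega
  have hJ1 : (J d' Y p).1 = sigmaP d' s Y := rfl
  have hJ2 : (J d' Y p).2 = p' := rfl
  have haux1 : -(d' : ℤ) ≤ infD d' (suppC d' Y.2) - s ∧
      infD d' (suppC d' Y.2) - s ≤ (d' : ℤ) := by
    constructor <;> omega
  have haux2 : -(d' : ℤ) ≤ supD d' (suppC d' Y.1) - s ∧
      supD d' (suppC d' Y.1) - s ≤ (d' : ℤ) := by
    constructor <;> omega
  have hA : aC d' (J d' Y p).1 = a - s := by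
    rw [hJ1, aC, sigmaP, ha]
    exact infD_sigma hne2 haux1.1 haux1.2
  have hB : bC d' (J d' Y p).1 = b - s := by
    rw [hJ1, bC, sigmaP, hb]
    exact supD_sigma hne1 haux2.1 haux2.2
  refine ⟨by rw [hA, hJ2, ← hs], by rw [hB, hJ2, ← hs], ?_⟩
  rw [hA, hB, hJ2]
  have : ceilHalf p' = ceilHalf p + s := by rw [hs, shift]; ring
  rw [this, ha, hb]
  ring

end COB
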